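/- arXiv:1505.04304 — 2 statements merged into one kernel-verified Lean document; each statement's English description precedes it below -/
import Mathlib

section
/- If A and B are summand-ideals of the pseudo MV-algebra M = Γ(G,u), then A ∩ B is a summand-ideal of M. -/
variable {G : Type*} [Lattice G] [AddGroup G]
  [CovariantClass G G (· + ·) (· ≤ ·)]
  [CovariantClass G G (Function.swap (· + ·)) (· ≤ ·)]

/-- `u` is a strong unit of the lattice-ordered group `G`. -/
def IsStrongUnit (u : G) : Prop := 0 ≤ u ∧ ∀ x : G, ∃ n : ℕ, x ≤ n • u

/-- The operation `x ⊕ y := (x + y) ⊓ u` of the pseudo MV-algebra `Γ(G,u)`. -/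
def oplus (u x y : G) : G := (x + y) ⊓ u

/-- The operation `x ⊙ y := (x - u + y) ⊔ 0` of the pseudo MV-algebra `Γ(G,u)`. -/
def odot (u x y : G) : G := (x - u + y) ⊔ 0

/-- `n.x := x ⊕ ⋯ ⊕ x` (`n` summands), with `0.x = 0`. -/
def nOplus (u : G) : ℕ → G → G
  | 0, _ => 0
  | n + 1, x => oplus u (nOplus u n x) x

/-- `I` is an ideal of the pseudo MV-algebra with carrier `C ⊆ Γ(G,u)`:
a nonempty subset of `C`, downward closed within `C`, and closed under `⊕`. -/
def IsIdealIn (u : G) (C I : Set G) : Prop :=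
  I ⊆ C ∧ I.Nonempty ∧ (∀ x ∈ I, ∀ y ∈ C, y ≤ x → y ∈ I) ∧
    ∀ x ∈ I, ∀ y ∈ I, oplus u x y ∈ I

/-- `I` is a normal ideal: `x ⊕ I = I ⊕ x` for all `x ∈ C`. -/
def IsNormalIdealIn (u : G) (C I : Set G) : Prop :=
  IsIdealIn u C I ∧ ∀ x ∈ C, (fun i => oplus u x i) '' I = (fun i => oplus u i x) '' I

/-- `⟨X⟩_n`, the smallest normal ideal (of the carrier `C`) containing `X`. -/
def normalGenIn (u : G) (C X : Set G) : Set G :=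
  ⋂₀ {I | IsNormalIdealIn u C I ∧ X ⊆ I}

/-- The polar `X^⊥ = {y ∈ C : y ∧ x = 0 for all x ∈ X}` computed in carrier `C`. -/
def polarIn (C X : Set G) : Set G := {y ∈ C | ∀ x ∈ X, y ⊓ x = 0}

/-- `A ⊕ B := {a ⊕ b : a ∈ A, b ∈ B}`. -/
def setOplus (u : G) (A B : Set G) : Set G := Set.image2 (oplus u) A B

/-- `↓a` computed within the carrier `C`. -/
def dsetIn (C : Set G) (a : G) : Set G := {x ∈ C | x ≤ a}

/-- `I` is a summand-ideal of the carrier `C`: a normal ideal such that for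
some normal ideal `J`, `I ∩ J = {0}` and `⟨I ∪ J⟩_n = C`. -/
def IsSummandIdealIn (u : G) (C I : Set G) : Prop :=
  IsNormalIdealIn u C I ∧ ∃ J, IsNormalIdealIn u C J ∧ I ∩ J = {0} ∧
    normalGenIn u C (I ∪ J) = C

/-- `I` is a polar ideal of the carrier `C`: `I = I^⊥⊥`. -/
def IsPolarIdealIn (C I : Set G) : Prop := polarIn C (polarIn C I) = I

/-- `a` is a Boolean element of the carrier `C`: `a ∈ C` and `a ⊕ a = a`. -/
def IsBooleanIn (u : G) (C : Set G) (a : G) : Prop := a ∈ C ∧ oplus u a a = a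

/-- The carrier `C` is strongly projectable: every polar ideal is a summand-ideal. -/
def IsStronglyProjectableIn (u : G) (C : Set G) : Prop :=
  ∀ I : Set G, IsPolarIdealIn C I → IsSummandIdealIn u C I

/-- `N` is a subalgebra of `Γ(G,u)`: contains `0` and `u`, closed under `⊕`,
`x⁻ = u - x` and `x∼ = -x + u`. -/
def IsSubalg (u : G) (N : Set G) : Prop :=
  N ⊆ Set.Icc 0 u ∧ 0 ∈ N ∧ u ∈ N ∧
    (∀ x ∈ N, ∀ y ∈ N, oplus u x y ∈ N) ∧
    (∀ x ∈ N, u - x ∈ N) ∧ (∀ x ∈ N, -x + u ∈ N)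

/-- `N` is a large subalgebra of `Γ(G,u)`: for every nonzero `y ∈ Γ(G,u)` there
are `n ∈ ℕ` and a nonzero `x ∈ N` with `x ≤ n.y`. -/
def IsLargeSubalg (u : G) (N : Set G) : Prop :=
  IsSubalg u N ∧ ∀ y ∈ Set.Icc (0 : G) u, y ≠ 0 →
    ∃ n : ℕ, ∃ x ∈ N, x ≠ 0 ∧ x ≤ nOplus u n y

set_option linter.unusedSectionVars false
set_option linter.unusedVariables false

section MyAux
variable {u : G}

lemma my_zero_mem_ideal {I : Set G} (hI : IsIdealIn u (Set.Icc 0 u) I) : (0:G) ∈ I := by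
  obtain ⟨x, hx⟩ := hI.2.1
  exact hI.2.2.1 x hx 0 ⟨le_refl 0, (hI.1 hx).1.trans (hI.1 hx).2⟩ (hI.1 hx).1

lemma my_oplus_mem_Icc {x y : G} (hx : x ∈ Set.Icc (0:G) u) (hy : y ∈ Set.Icc (0:G) u) :
    oplus u x y ∈ Set.Icc (0:G) u :=
  ⟨le_inf (add_nonneg hx.1 hy.1) (hx.1.trans hx.2), inf_le_right⟩

lemma my_le_oplus_left {x y : G} (hx : x ≤ u) (hy : 0 ≤ y) : x ≤ oplus u x y :=
  le_inf (le_add_of_nonneg_right hy) hx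

lemma my_le_oplus_right {x y : G} (hx : 0 ≤ x) (hy : y ≤ u) : y ≤ oplus u x y :=
  le_inf (le_add_of_nonneg_left hx) hy

lemma my_oplus_zero {x : G} (hx : x ≤ u) : oplus u x 0 = x := by
  simp [oplus, inf_eq_left.2 hx]

lemma my_zero_oplus {x : G} (hx : x ≤ u) : oplus u 0 x = x := by
  simp [oplus, inf_eq_left.2 hx]

lemma my_oplus_assoc {x y z : G} (hx : 0 ≤ x) (hz : 0 ≤ z) :
    oplus u (oplus u x y) z = oplus u x (oplus u y z) := by
  have h1 : (u + z) ⊓ u = u := inf_eq_right.2 (le_add_of_nonneg_right hz)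
  have h2 : (x + u) ⊓ u = u := inf_eq_right.2 (le_add_of_nonneg_left hx)
  unfold oplus
  rw [inf_add, add_inf, inf_assoc, inf_assoc, h1, h2, add_assoc]

lemma my_disj_add_eq_sup {a b : G} (h : a ⊓ b = 0) : a + b = b ⊔ a := by
  have h0 : a + (-(a ⊓ b) + b) = a + b := by rw [h, neg_zero, zero_add]
  rw [← h0, neg_inf, sup_add, neg_add_cancel, add_sup, ← add_assoc, add_neg_cancel,
    zero_add, add_zero]

lemma my_disj_add_comm {a b : G} (h : a ⊓ b = 0) : a + b = b + a := by
  rw [my_disj_add_eq_sup h, my_disj_add_eq_sup (by rw [inf_comm]; exact h), sup_comm]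

lemma my_ideal_downward_oplus {I J : Set G} (hI : IsIdealIn u (Set.Icc 0 u) I)
    (hJ : IsIdealIn u (Set.Icc 0 u) J) {a b y : G} (ha : a ∈ I) (hb : b ∈ J)
    (hy : y ∈ Set.Icc (0:G) u) (hle : y ≤ oplus u a b) :
    ∃ a₁ ∈ I, ∃ b₁ ∈ J, y = oplus u a₁ b₁ := by
  obtain ⟨ha0, hau⟩ := hI.1 ha
  obtain ⟨hb0, hbu⟩ := hJ.1 hb
  have ha₁I : y ⊓ a ∈ I :=
    hI.2.2.1 a ha (y ⊓ a) ⟨le_inf hy.1 ha0, inf_le_right.trans hau⟩ inf_le_right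
  have hb₁eq : -(y ⊓ a) + y = 0 ⊔ (-a + y) := by
    rw [neg_inf, sup_add, neg_add_cancel]
  have hb₁0 : 0 ≤ -(y ⊓ a) + y := hb₁eq ▸ le_sup_left
  have hb₁b : -(y ⊓ a) + y ≤ b := by
    rw [hb₁eq]
    refine sup_le hb0 ?_
    have h2 := add_le_add_right (hle.trans inf_le_left) (-a)
    rwa [← add_assoc, neg_add_cancel, zero_add] at h2
  have hb₁J : (-(y ⊓ a) + y) ∈ J :=
    hJ.2.2.1 b hb _ ⟨hb₁0, hb₁b.trans hbu⟩ hb₁b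
  refine ⟨y ⊓ a, ha₁I, -(y ⊓ a) + y, hb₁J, ?_⟩
  have h3 : y ⊓ a + (-(y ⊓ a) + y) = y := by
    rw [← add_assoc, add_neg_cancel, zero_add]
  rw [oplus, h3, inf_eq_left.2 hy.2]

lemma my_normal_conj {I : Set G} (hI : IsNormalIdealIn u (Set.Icc 0 u) I)
    {x i : G} (hx : x ∈ Set.Icc (0:G) u) (hi : i ∈ I) :
    (x + i - x) ⊓ (u - x) ∈ I := by
  have hmem : oplus u x i ∈ (fun i => oplus u i x) '' I := by
    rw [← hI.2 x hx]; exact ⟨i, hi, rfl⟩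
  obtain ⟨j, hj, hjx⟩ := hmem
  have hkey : (x + i - x) ⊓ (u - x) + x = oplus u x i := by
    rw [inf_add, sub_add_cancel, sub_add_cancel]; rfl
  have hle : (x + i - x) ⊓ (u - x) ≤ j := by
    have h1 : (x + i - x) ⊓ (u - x) + x ≤ j + x := by
      rw [hkey, ← hjx]; exact inf_le_left
    have h2 := add_le_add_left h1 (-x)
    rwa [add_assoc, add_assoc, add_neg_cancel, add_zero, add_zero] at h2
  obtain ⟨hi0, _⟩ := hI.1.1 hi
  have h00 : (0:G) ≤ x + i - x := by
    have h9 : x - x ≤ x + i - x := sub_le_sub_right (le_add_of_nonneg_right hi0 : x ≤ x + i) x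
    simpa using h9
  have hC : (x + i - x) ⊓ (u - x) ∈ Set.Icc (0:G) u :=
    ⟨le_inf h00 (sub_nonneg.2 hx.2), inf_le_right.trans (sub_le_self u hx.1)⟩
  exact hI.1.2.2.1 j hj _ hC hle

lemma my_normal_conj' {I : Set G} (hI : IsNormalIdealIn u (Set.Icc 0 u) I)
    {x i : G} (hx : x ∈ Set.Icc (0:G) u) (hi : i ∈ I) :
    (-x + i + x) ⊓ (-x + u) ∈ I := by
  have hmem : oplus u i x ∈ (fun i => oplus u x i) '' I := by
    rw [hI.2 x hx]; exact ⟨i, hi, rfl⟩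
  obtain ⟨k, hk, hkx⟩ := hmem
  have hx1 : x + (-x + i + x) = i + x := by
    rw [← add_assoc, ← add_assoc, add_neg_cancel, zero_add]
  have hx2 : x + (-x + u) = u := by rw [← add_assoc, add_neg_cancel, zero_add]
  have hkey : x + ((-x + i + x) ⊓ (-x + u)) = oplus u i x := by
    rw [add_inf, hx1, hx2]; rfl
  have hle : (-x + i + x) ⊓ (-x + u) ≤ k := by
    have h1 : x + ((-x + i + x) ⊓ (-x + u)) ≤ x + k := by
      rw [hkey, ← hkx]; exact inf_le_left
    have h2 := add_le_add_right h1 (-x)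
    rwa [← add_assoc, ← add_assoc, neg_add_cancel, zero_add, zero_add] at h2
  obtain ⟨hi0, _⟩ := hI.1.1 hi
  have h00 : (0:G) ≤ -x + i + x := by
    have := add_le_add_left (le_add_of_nonneg_right (b := i) (a := -x) hi0) x
    simpa using this
  have hxu : -x + u ≤ u := by
    have := add_le_add_right (neg_nonpos.2 hx.1) u
    simpa using this
  have hC : (-x + i + x) ⊓ (-x + u) ∈ Set.Icc (0:G) u :=
    ⟨le_inf h00 (by simpa using add_le_add_left hx.2 (-x)), inf_le_right.trans hxu⟩
  exact hI.1.2.2.1 k hk _ hC hle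

lemma my_normal_of_conj {I : Set G} (hI : IsIdealIn u (Set.Icc 0 u) I)
    (h1 : ∀ x ∈ Set.Icc (0:G) u, ∀ i ∈ I, (x + i - x) ⊓ (u - x) ∈ I)
    (h2 : ∀ x ∈ Set.Icc (0:G) u, ∀ i ∈ I, (-x + i + x) ⊓ (-x + u) ∈ I) :
    IsNormalIdealIn u (Set.Icc 0 u) I := by
  refine ⟨hI, fun x hx => ?_⟩
  ext t
  constructor
  · rintro ⟨i, hi, rfl⟩
    refine ⟨(x + i - x) ⊓ (u - x), h1 x hx i hi, ?_⟩
    show oplus u _ x = oplus u x i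
    rw [oplus, oplus, inf_add, sub_add_cancel, sub_add_cancel, inf_assoc, inf_idem]
  · rintro ⟨i, hi, rfl⟩
    refine ⟨(-x + i + x) ⊓ (-x + u), h2 x hx i hi, ?_⟩
    show oplus u x _ = oplus u i x
    have hx1 : x + (-x + i + x) = i + x := by
      rw [← add_assoc, ← add_assoc, add_neg_cancel, zero_add]
    have hx2 : x + (-x + u) = u := by rw [← add_assoc, add_neg_cancel, zero_add]
    rw [oplus, oplus, add_inf, hx1, hx2, inf_assoc, inf_idem]

lemma my_ideal_inter {I J : Set G} (hI : IsIdealIn u (Set.Icc 0 u) I)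
    (hJ : IsIdealIn u (Set.Icc 0 u) J) : IsIdealIn u (Set.Icc 0 u) (I ∩ J) :=
  ⟨fun _ hx => hI.1 hx.1, ⟨0, my_zero_mem_ideal hI, my_zero_mem_ideal hJ⟩,
   fun x hx y hy hle => ⟨hI.2.2.1 x hx.1 y hy hle, hJ.2.2.1 x hx.2 y hy hle⟩,
   fun x hx y hy => ⟨hI.2.2.2 x hx.1 y hy.1, hJ.2.2.2 x hx.2 y hy.2⟩⟩

lemma my_normal_inter {I J : Set G} (hI : IsNormalIdealIn u (Set.Icc 0 u) I)
    (hJ : IsNormalIdealIn u (Set.Icc 0 u) J) :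
    IsNormalIdealIn u (Set.Icc 0 u) (I ∩ J) :=
  my_normal_of_conj (my_ideal_inter hI.1 hJ.1)
    (fun x hx i hi => ⟨my_normal_conj hI hx hi.1, my_normal_conj hJ hx hi.2⟩)
    (fun x hx i hi => ⟨my_normal_conj' hI hx hi.1, my_normal_conj' hJ hx hi.2⟩)

lemma my_disj_of_inter {I J : Set G} (hI : IsIdealIn u (Set.Icc 0 u) I)
    (hJ : IsIdealIn u (Set.Icc 0 u) J) (h : I ∩ J = {0}) :
    ∀ a ∈ I, ∀ b ∈ J, a ⊓ b = 0 := by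
  intro a ha b hb
  obtain ⟨ha0, hau⟩ := hI.1 ha
  obtain ⟨hb0, _⟩ := hJ.1 hb
  have hC : a ⊓ b ∈ Set.Icc (0:G) u := ⟨le_inf ha0 hb0, inf_le_left.trans hau⟩
  have : a ⊓ b ∈ I ∩ J :=
    ⟨hI.2.2.1 a ha _ hC inf_le_left, hJ.2.2.1 b hb _ hC inf_le_right⟩
  rw [h] at this; exact this

lemma my_inter_eq_singleton {I J : Set G} (hI : IsIdealIn u (Set.Icc 0 u) I)
    (hJ : IsIdealIn u (Set.Icc 0 u) J) (hd : ∀ a ∈ I, ∀ b ∈ J, a ⊓ b = 0) :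
    I ∩ J = {0} := by
  ext x
  constructor
  · rintro ⟨hx1, hx2⟩
    have := hd x hx1 x hx2
    simpa using this
  · rintro rfl
    exact ⟨my_zero_mem_ideal hI, my_zero_mem_ideal hJ⟩

lemma my_inf_u_oplus {x y : G} (hx : 0 ≤ x) (hy : 0 ≤ y) (h0u : (0:G) ≤ u) :
    (x + y) ⊓ u ≤ oplus u (x ⊓ u) (y ⊓ u) := by
  refine le_inf ?_ inf_le_right
  rw [inf_add, add_inf, add_inf]
  exact le_inf
    (le_inf inf_le_left (inf_le_right.trans (le_add_of_nonneg_left hx)))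
    (le_inf (inf_le_right.trans (le_add_of_nonneg_right hy))
      (inf_le_right.trans (le_add_of_nonneg_right h0u)))

lemma my_setOplus_normal {I J : Set G}
    (hI : IsNormalIdealIn u (Set.Icc 0 u) I) (hJ : IsNormalIdealIn u (Set.Icc 0 u) J)
    (hd : ∀ a ∈ I, ∀ b ∈ J, a ⊓ b = 0) :
    IsNormalIdealIn u (Set.Icc 0 u) (setOplus u I J) := by
  have h0I := my_zero_mem_ideal hI.1
  have h0J := my_zero_mem_ideal hJ.1
  have h0u : (0:G) ≤ u := ((hI.1.1 h0I).1).trans (hI.1.1 h0I).2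
  have hsub : setOplus u I J ⊆ Set.Icc (0:G) u := by
    rintro _ ⟨a, ha, b, hb, rfl⟩
    exact my_oplus_mem_Icc (hI.1.1 ha) (hJ.1.1 hb)
  have hdown : ∀ x ∈ setOplus u I J, ∀ y ∈ Set.Icc (0:G) u, y ≤ x → y ∈ setOplus u I J := by
    rintro _ ⟨a, ha, b, hb, rfl⟩ y hy hle
    obtain ⟨a₁, ha₁, b₁, hb₁, rfl⟩ := my_ideal_downward_oplus hI.1 hJ.1 ha hb hy hle
    exact ⟨a₁, ha₁, b₁, hb₁, rfl⟩
  have hideal : IsIdealIn u (Set.Icc 0 u) (setOplus u I J) := by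
    refine ⟨hsub, ⟨oplus u 0 0, 0, h0I, 0, h0J, rfl⟩, hdown, ?_⟩
    rintro _ ⟨a, ha, b, hb, rfl⟩ _ ⟨a', ha', b', hb', rfl⟩
    obtain ⟨ha0, hau⟩ := hI.1.1 ha
    obtain ⟨hb0, hbu⟩ := hJ.1.1 hb
    obtain ⟨ha'0, ha'u⟩ := hI.1.1 ha'
    obtain ⟨hb'0, hb'u⟩ := hJ.1.1 hb'
    have hcomm : b + a' = a' + b := my_disj_add_comm (by rw [inf_comm]; exact hd a' ha' b hb)
    have hre : a + b + (a' + b') = a + a' + (b + b') := by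
      rw [add_assoc a b, ← add_assoc b a' b', hcomm, add_assoc a' b b', ← add_assoc,
        ← add_assoc]
    have hstep1 : oplus u (oplus u a b) (oplus u a' b') ≤ (a + a' + (b + b')) ⊓ u := by
      rw [← hre]
      exact inf_le_inf_right u (add_le_add inf_le_left inf_le_left)
    have hstep2 : (a + a' + (b + b')) ⊓ u ≤ oplus u (oplus u a a') (oplus u b b') :=
      my_inf_u_oplus (add_nonneg ha0 ha'0) (add_nonneg hb0 hb'0) h0u
    refine hdown _ ⟨oplus u a a', hI.1.2.2.2 a ha a' ha', oplus u b b',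
      hJ.1.2.2.2 b hb b' hb', rfl⟩ _ (my_oplus_mem_Icc (my_oplus_mem_Icc ⟨ha0, hau⟩ ⟨hb0, hbu⟩)
        (my_oplus_mem_Icc ⟨ha'0, ha'u⟩ ⟨hb'0, hb'u⟩)) (hstep1.trans hstep2)
  refine ⟨hideal, fun x hx => ?_⟩
  ext t
  constructor
  · rintro ⟨_, ⟨a, ha, b, hb, rfl⟩, rfl⟩
    have hxa : oplus u x a ∈ (fun i => oplus u i x) '' I := by
      rw [← hI.2 x hx]; exact ⟨a, ha, rfl⟩
    obtain ⟨a₁, ha₁, hax⟩ := hxa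
    dsimp only at hax
    have hxb : oplus u x b ∈ (fun i => oplus u i x) '' J := by
      rw [← hJ.2 x hx]; exact ⟨b, hb, rfl⟩
    obtain ⟨b₁, hb₁, hbx⟩ := hxb
    dsimp only at hbx
    refine ⟨oplus u a₁ b₁, ⟨a₁, ha₁, b₁, hb₁, rfl⟩, ?_⟩
    show oplus u (oplus u a₁ b₁) x = oplus u x (oplus u a b)
    rw [my_oplus_assoc (hI.1.1 ha₁).1 hx.1, hbx,
      ← my_oplus_assoc (hI.1.1 ha₁).1 (hJ.1.1 hb).1, hax,
      my_oplus_assoc hx.1 (hJ.1.1 hb).1]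
  · rintro ⟨_, ⟨a, ha, b, hb, rfl⟩, rfl⟩
    have hbx : oplus u b x ∈ (fun i => oplus u x i) '' J := by
      rw [hJ.2 x hx]; exact ⟨b, hb, rfl⟩
    obtain ⟨b₂, hb₂, hbx2⟩ := hbx
    dsimp only at hbx2
    have hax : oplus u a x ∈ (fun i => oplus u x i) '' I := by
      rw [hI.2 x hx]; exact ⟨a, ha, rfl⟩
    obtain ⟨a₂, ha₂, hax2⟩ := hax
    dsimp only at hax2
    refine ⟨oplus u a₂ b₂, ⟨a₂, ha₂, b₂, hb₂, rfl⟩, ?_⟩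
    show oplus u x (oplus u a₂ b₂) = oplus u (oplus u a b) x
    rw [← my_oplus_assoc hx.1 (hJ.1.1 hb₂).1, hax2,
      my_oplus_assoc (hI.1.1 ha).1 (hJ.1.1 hb₂).1, hbx2,
      ← my_oplus_assoc (hI.1.1 ha).1 hx.1]

lemma my_normalGen_union {I J : Set G}
    (hI : IsNormalIdealIn u (Set.Icc 0 u) I) (hJ : IsNormalIdealIn u (Set.Icc 0 u) J)
    (hd : ∀ a ∈ I, ∀ b ∈ J, a ⊓ b = 0) :
    normalGenIn u (Set.Icc 0 u) (I ∪ J) = setOplus u I J := by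
  have h0I := my_zero_mem_ideal hI.1
  have h0J := my_zero_mem_ideal hJ.1
  apply subset_antisymm
  · apply Set.sInter_subset_of_mem
    refine ⟨my_setOplus_normal hI hJ hd, Set.union_subset ?_ ?_⟩
    · intro a ha
      exact ⟨a, ha, 0, h0J, my_oplus_zero (hI.1.1 ha).2⟩
    · intro b hb
      exact ⟨0, h0I, b, hb, my_zero_oplus (hJ.1.1 hb).2⟩
  · rintro _ ⟨a, ha, b, hb, rfl⟩
    intro K hK
    exact hK.1.1.2.2.2 a (hK.2 (Or.inl ha)) b (hK.2 (Or.inr hb))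

end MyAux

theorem stmt6 (u : G) (hu : IsStrongUnit u) (A B : Set G)
    (hA : IsSummandIdealIn u (Set.Icc (0 : G) u) A)
    (hB : IsSummandIdealIn u (Set.Icc (0 : G) u) B) :
    IsSummandIdealIn u (Set.Icc (0 : G) u) (A ∩ B) := by
  obtain ⟨hAn, A', hA'n, hAA', hAgen⟩ := hA
  obtain ⟨hBn, B', hB'n, hBB', hBgen⟩ := hB
  have h0u : (0:G) ≤ u := hu.1
  have hdA : ∀ a ∈ A, ∀ b ∈ A', a ⊓ b = 0 := my_disj_of_inter hAn.1 hA'n.1 hAA'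
  have hdB : ∀ a ∈ B, ∀ b ∈ B', a ⊓ b = 0 := my_disj_of_inter hBn.1 hB'n.1 hBB'
  have hAfull : setOplus u A A' = Set.Icc (0:G) u := by
    rw [← my_normalGen_union hAn hA'n hdA]; exact hAgen
  have hBfull : setOplus u B B' = Set.Icc (0:G) u := by
    rw [← my_normalGen_union hBn hB'n hdB]; exact hBgen
  have hE1n : IsNormalIdealIn u (Set.Icc 0 u) (A ∩ B') := my_normal_inter hAn hB'n
  have hE2n : IsNormalIdealIn u (Set.Icc 0 u) (A' ∩ B) := my_normal_inter hA'n hBn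
  have hE3n : IsNormalIdealIn u (Set.Icc 0 u) (A' ∩ B') := my_normal_inter hA'n hB'n
  have hABn : IsNormalIdealIn u (Set.Icc 0 u) (A ∩ B) := my_normal_inter hAn hBn
  have hd23 : ∀ a ∈ A' ∩ B, ∀ b ∈ A' ∩ B', a ⊓ b = 0 := fun a ha b hb => hdB a ha.2 b hb.2
  have hD23n : IsNormalIdealIn u (Set.Icc 0 u) (setOplus u (A' ∩ B) (A' ∩ B')) :=
    my_setOplus_normal hE2n hE3n hd23
  have hE1D : (A ∩ B') ∩ setOplus u (A' ∩ B) (A' ∩ B') = {0} := by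
    ext x
    constructor
    · rintro ⟨hx1, e₂, he₂, e₃, he₃, rfl⟩
      obtain ⟨he₂0, he₂u⟩ := hE2n.1.1 he₂
      obtain ⟨he₃0, he₃u⟩ := hE3n.1.1 he₃
      have h2 : e₂ ∈ A ∩ B' := hE1n.1.2.2.1 _ hx1 e₂ ⟨he₂0, he₂u⟩ (my_le_oplus_left he₂u he₃0)
      have h3 : e₃ ∈ A ∩ B' := hE1n.1.2.2.1 _ hx1 e₃ ⟨he₃0, he₃u⟩ (my_le_oplus_right he₂0 he₃u)
      have hz2 : e₂ = 0 := by
        have hm : e₂ ∈ A ∩ A' := ⟨h2.1, he₂.1⟩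
        rwa [hAA', Set.mem_singleton_iff] at hm
      have hz3 : e₃ = 0 := by
        have hm : e₃ ∈ A ∩ A' := ⟨h3.1, he₃.1⟩
        rwa [hAA', Set.mem_singleton_iff] at hm
      simp only [hz2, hz3, Set.mem_singleton_iff]
      exact my_zero_oplus h0u
    · rintro rfl
      exact ⟨⟨my_zero_mem_ideal hAn.1, my_zero_mem_ideal hB'n.1⟩,
        0, ⟨my_zero_mem_ideal hA'n.1, my_zero_mem_ideal hBn.1⟩,
        0, ⟨my_zero_mem_ideal hA'n.1, my_zero_mem_ideal hB'n.1⟩, my_zero_oplus h0u⟩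
  have hdE1D : ∀ a ∈ A ∩ B', ∀ b ∈ setOplus u (A' ∩ B) (A' ∩ B'), a ⊓ b = 0 :=
    my_disj_of_inter hE1n.1 hD23n.1 hE1D
  have hJn : IsNormalIdealIn u (Set.Icc 0 u)
      (setOplus u (A ∩ B') (setOplus u (A' ∩ B) (A' ∩ B'))) :=
    my_setOplus_normal hE1n hD23n hdE1D
  have hABJ : (A ∩ B) ∩ setOplus u (A ∩ B') (setOplus u (A' ∩ B) (A' ∩ B')) = {0} := by
    ext x
    constructor
    · rintro ⟨hx1, e₁, he₁, d, hd', rfl⟩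
      obtain ⟨he₁0, he₁u⟩ := hE1n.1.1 he₁
      obtain ⟨hd0, hdu⟩ := hD23n.1.1 hd'
      have h1 : e₁ ∈ A ∩ B := hABn.1.2.2.1 _ hx1 e₁ ⟨he₁0, he₁u⟩ (my_le_oplus_left he₁u hd0)
      have h2 : d ∈ A ∩ B := hABn.1.2.2.1 _ hx1 d ⟨hd0, hdu⟩ (my_le_oplus_right he₁0 hdu)
      have he₁z : e₁ = 0 := by
        have hm : e₁ ∈ B ∩ B' := ⟨h1.2, he₁.2⟩
        rwa [hBB', Set.mem_singleton_iff] at hm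
      have hdz : d = 0 := by
        obtain ⟨e₂, he₂, e₃, he₃, rfl⟩ := hd'
        obtain ⟨he₂0, he₂u⟩ := hE2n.1.1 he₂
        obtain ⟨he₃0, he₃u⟩ := hE3n.1.1 he₃
        have h3 : e₂ ∈ A ∩ B := hABn.1.2.2.1 _ h2 e₂ ⟨he₂0, he₂u⟩ (my_le_oplus_left he₂u he₃0)
        have h4 : e₃ ∈ A ∩ B := hABn.1.2.2.1 _ h2 e₃ ⟨he₃0, he₃u⟩ (my_le_oplus_right he₂0 he₃u)
        have hz2 : e₂ = 0 := by
          have hm : e₂ ∈ A ∩ A' := ⟨h3.1, he₂.1⟩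
          rwa [hAA', Set.mem_singleton_iff] at hm
        have hz3 : e₃ = 0 := by
          have hm : e₃ ∈ A ∩ A' := ⟨h4.1, he₃.1⟩
          rwa [hAA', Set.mem_singleton_iff] at hm
        rw [hz2, hz3]
        exact my_zero_oplus h0u
      simp only [he₁z, hdz, Set.mem_singleton_iff]
      exact my_zero_oplus h0u
    · rintro rfl
      refine ⟨⟨my_zero_mem_ideal hAn.1, my_zero_mem_ideal hBn.1⟩,
        0, ⟨my_zero_mem_ideal hAn.1, my_zero_mem_ideal hB'n.1⟩,
        0, my_zero_mem_ideal hD23n.1, my_zero_oplus h0u⟩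
  have hdABJ : ∀ a ∈ A ∩ B, ∀ b ∈ setOplus u (A ∩ B') (setOplus u (A' ∩ B) (A' ∩ B')),
      a ⊓ b = 0 := my_disj_of_inter hABn.1 hJn.1 hABJ
  have hfull : setOplus u (A ∩ B) (setOplus u (A ∩ B') (setOplus u (A' ∩ B) (A' ∩ B')))
      = Set.Icc (0:G) u := by
    apply subset_antisymm
    · rintro _ ⟨a, ha, b, hb, rfl⟩
      exact my_oplus_mem_Icc (hABn.1.1 ha) (hJn.1.1 hb)
    · intro x hx
      have hx1 : x ∈ setOplus u A A' := hAfull ▸ hx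
      obtain ⟨a, haA, a₂, ha₂, rfl⟩ := hx1
      have ha' : a ∈ setOplus u B B' := hBfull ▸ (hAn.1.1 haA)
      obtain ⟨b, hbB, b₂, hb₂, hab⟩ := ha'
      obtain ⟨hb0, hbu⟩ := hBn.1.1 hbB
      obtain ⟨hb₂0, hb₂u⟩ := hB'n.1.1 hb₂
      have hbA : b ∈ A := hAn.1.2.2.1 a haA b ⟨hb0, hbu⟩ (hab ▸ my_le_oplus_left hbu hb₂0)
      have hb₂A : b₂ ∈ A := hAn.1.2.2.1 a haA b₂ ⟨hb₂0, hb₂u⟩ (hab ▸ my_le_oplus_right hb0 hb₂u)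
      have ha₂' : a₂ ∈ setOplus u B B' := hBfull ▸ (hA'n.1.1 ha₂)
      obtain ⟨c, hcB, c₂, hc₂, hc⟩ := ha₂'
      obtain ⟨hc0, hcu⟩ := hBn.1.1 hcB
      obtain ⟨hc₂0, hc₂u⟩ := hB'n.1.1 hc₂
      have hcA' : c ∈ A' := hA'n.1.2.2.1 a₂ ha₂ c ⟨hc0, hcu⟩ (hc ▸ my_le_oplus_left hcu hc₂0)
      have hc₂A' : c₂ ∈ A' := hA'n.1.2.2.1 a₂ ha₂ c₂ ⟨hc₂0, hc₂u⟩
        (hc ▸ my_le_oplus_right hc0 hc₂u)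
      refine ⟨b, ⟨hbA, hbB⟩, oplus u b₂ (oplus u c c₂),
        ⟨b₂, ⟨hb₂A, hb₂⟩, oplus u c c₂, ⟨c, ⟨hcA', hcB⟩, c₂, ⟨hc₂A', hc₂⟩, rfl⟩, rfl⟩, ?_⟩
      rw [← hab, ← hc]
      exact (my_oplus_assoc hb0 (my_oplus_mem_Icc ⟨hc0, hcu⟩ ⟨hc₂0, hc₂u⟩).1).symm
  refine ⟨hABn, setOplus u (A ∩ B') (setOplus u (A' ∩ B) (A' ∩ B')), hJn, hABJ, ?_⟩
  rw [my_normalGen_union hABn hJn hdABJ]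
  exact hfull
end

section
/- If A is a summand-ideal of the pseudo MV-algebra M = Γ(G,u), then there is a unique Boolean element a ∈ A such that A = ↓a. -/
variable {G : Type*} [Lattice G] [AddGroup G]
  [CovariantClass G G (· + ·) (· ≤ ·)]
  [CovariantClass G G (Function.swap (· + ·)) (· ≤ ·)]

section Aux

variable {G : Type*} [Lattice G] [AddGroup G]
  [CovariantClass G G (· + ·) (· ≤ ·)]
  [CovariantClass G G (Function.swap (· + ·)) (· ≤ ·)]

lemma trunc_left (u r q : G) (hq : 0 ≤ q) : (r ⊓ u + q) ⊓ u = (r + q) ⊓ u := by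
  rw [inf_add, inf_assoc]
  congr 1
  exact inf_eq_right.2 (le_add_of_nonneg_right hq)

lemma trunc_right (u r p : G) (hp : 0 ≤ p) : (p + (r ⊓ u)) ⊓ u = (p + r) ⊓ u := by
  rw [add_inf, inf_assoc]
  congr 1
  exact inf_eq_right.2 (le_add_of_nonneg_left hp)

lemma trunc_mid (u p r s : G) (hp : 0 ≤ p) (hs : 0 ≤ s) :
    (p + (r ⊓ u) + s) ⊓ u = (p + r + s) ⊓ u := by
  rw [add_inf, inf_add, inf_assoc]
  congr 1
  refine inf_eq_right.2 ?_
  calc u ≤ p + u := le_add_of_nonneg_left hp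
    _ ≤ p + u + s := le_add_of_nonneg_right hs

lemma oplus_mono {u x x' y y' : G} (hx : x ≤ x') (hy : y ≤ y') :
    oplus u x y ≤ oplus u x' y' :=
  inf_le_inf_right u (add_le_add hx hy)

end Aux

theorem stmt8 (u : G) (hu : IsStrongUnit u) (A : Set G)
    (hA : IsSummandIdealIn u (Set.Icc (0 : G) u) A) :
    ∃! a : G, a ∈ A ∧ IsBooleanIn u (Set.Icc (0 : G) u) a ∧ A = dsetIn (Set.Icc (0 : G) u) a := by
  obtain ⟨hAn, B, hBn, hAB, hgen⟩ := hA
  obtain ⟨⟨hAC, hAne, hAdc, hAop⟩, hAnorm⟩ := hAn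
  obtain ⟨⟨hBC, hBne, hBdc, hBop⟩, hBnorm⟩ := hBn
  have hu0 : (0 : G) ≤ u := hu.1
  set C : Set G := Set.Icc (0 : G) u with hCdef
  have h0C : (0 : G) ∈ C := ⟨le_refl _, hu0⟩
  have h0A : (0 : G) ∈ A := by
    obtain ⟨x, hx⟩ := hAne; exact hAdc x hx 0 h0C (hAC hx).1
  have h0B : (0 : G) ∈ B := by
    obtain ⟨x, hx⟩ := hBne; exact hBdc x hx 0 h0C (hBC hx).1
  -- commuting lemmas from normality
  have hAcomm : ∀ x ∈ C, ∀ a ∈ A, ∃ a' ∈ A, oplus u x a = oplus u a' x := by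
    intro x hx a ha
    have h := hAnorm x hx
    have hmem : oplus u x a ∈ (fun i => oplus u x i) '' A := ⟨a, ha, rfl⟩
    rw [h] at hmem
    obtain ⟨a', ha', he⟩ := hmem
    exact ⟨a', ha', he.symm⟩
  have hAcomm' : ∀ x ∈ C, ∀ a ∈ A, ∃ a' ∈ A, oplus u a x = oplus u x a' := by
    intro x hx a ha
    have h := hAnorm x hx
    have hmem : oplus u a x ∈ (fun i => oplus u i x) '' A := ⟨a, ha, rfl⟩
    rw [← h] at hmem
    obtain ⟨a', ha', he⟩ := hmem
    exact ⟨a', ha', he.symm⟩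
  have hBcomm : ∀ x ∈ C, ∀ b ∈ B, ∃ b' ∈ B, oplus u x b = oplus u b' x := by
    intro x hx b hb
    have h := hBnorm x hx
    have hmem : oplus u x b ∈ (fun i => oplus u x i) '' B := ⟨b, hb, rfl⟩
    rw [h] at hmem
    obtain ⟨b', hb', he⟩ := hmem
    exact ⟨b', hb', he.symm⟩
  have hBcomm' : ∀ x ∈ C, ∀ b ∈ B, ∃ b' ∈ B, oplus u b x = oplus u x b' := by
    intro x hx b hb
    have h := hBnorm x hx
    have hmem : oplus u b x ∈ (fun i => oplus u i x) '' B := ⟨b, hb, rfl⟩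
    rw [← h] at hmem
    obtain ⟨b', hb', he⟩ := hmem
    exact ⟨b', hb', he.symm⟩
  -- key rearrangement: for a ∈ A, b ∈ B, x ∈ C :  (x + a + b) ⊓ u = (a₁ + b₁ + x) ⊓ u
  have key1 : ∀ x ∈ C, ∀ a ∈ A, ∀ b ∈ B,
      ∃ a₁ ∈ A, ∃ b₁ ∈ B, (x + a + b) ⊓ u = (a₁ + b₁ + x) ⊓ u := by
    intro x hx a ha b hb
    obtain ⟨a₁, ha₁, hea⟩ := hAcomm x hx a ha
    obtain ⟨b₁, hb₁, heb⟩ := hBcomm x hx b hb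
    refine ⟨a₁, ha₁, b₁, hb₁, ?_⟩
    have e1 : (x + a + b) ⊓ u = ((x + a) ⊓ u + b) ⊓ u :=
      (trunc_left u (x + a) b (hBC hb).1).symm
    have e2 : ((a₁ + x) ⊓ u + b) ⊓ u = (a₁ + x + b) ⊓ u :=
      trunc_left u (a₁ + x) b (hBC hb).1
    have e3 : (a₁ + x + b) ⊓ u = (a₁ + ((x + b) ⊓ u)) ⊓ u := by
      rw [trunc_right u (x + b) a₁ (hAC ha₁).1, add_assoc]
    have e4 : (a₁ + ((b₁ + x) ⊓ u)) ⊓ u = (a₁ + b₁ + x) ⊓ u := by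
      rw [trunc_right u (b₁ + x) a₁ (hAC ha₁).1, add_assoc]
    rw [e1]
    unfold oplus at hea heb
    rw [hea, e2, e3, heb, e4]
  have key2 : ∀ x ∈ C, ∀ a ∈ A, ∀ b ∈ B,
      ∃ a₁ ∈ A, ∃ b₁ ∈ B, (a + b + x) ⊓ u = (x + (a₁ + b₁)) ⊓ u := by
    intro x hx a ha b hb
    obtain ⟨b₁, hb₁, heb⟩ := hBcomm' x hx b hb
    obtain ⟨a₁, ha₁, hea⟩ := hAcomm' x hx a ha
    refine ⟨a₁, ha₁, b₁, hb₁, ?_⟩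
    have e1 : (a + b + x) ⊓ u = (a + ((b + x) ⊓ u)) ⊓ u := by
      rw [trunc_right u (b + x) a (hAC ha).1, add_assoc]
    have e2 : (a + ((x + b₁) ⊓ u)) ⊓ u = ((a + x) ⊓ u + b₁) ⊓ u := by
      rw [trunc_right u (x + b₁) a (hAC ha).1, trunc_left u (a + x) b₁ (hBC hb₁).1,
        add_assoc]
    have e3 : ((x + a₁) ⊓ u + b₁) ⊓ u = (x + (a₁ + b₁)) ⊓ u := by
      rw [trunc_left u (x + a₁) b₁ (hBC hb₁).1, add_assoc]
    unfold oplus at hea heb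
    rw [e1, heb, e2, hea, e3]
  -- the candidate normal ideal
  set I : Set G := {x ∈ C | ∃ a ∈ A, ∃ b ∈ B, x ≤ oplus u a b} with hIdef
  have hIC : I ⊆ C := fun x hx => hx.1
  have hIideal : IsIdealIn u C I := by
    refine ⟨hIC, ⟨0, h0C, 0, h0A, 0, h0B, ?_⟩, ?_, ?_⟩
    · simp [oplus, hu0]
    · rintro x ⟨hxC, a, ha, b, hb, hxb⟩ y hyC hyx
      exact ⟨hyC, a, ha, b, hb, le_trans hyx hxb⟩
    · rintro x ⟨hxC, a, ha, b, hb, hxb⟩ y ⟨hyC, a', ha', b', hb', hyb⟩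
      have hxC' := hxC; have hyC' := hyC
      refine ⟨⟨le_inf (add_nonneg hxC.1 hyC.1) hu0, inf_le_right⟩, ?_⟩
      obtain ⟨b₂, hb₂, he⟩ := hBcomm' a' (hAC ha') b hb
      refine ⟨oplus u a a', hAop a ha a' ha', oplus u b₂ b', hBop b₂ hb₂ b' hb', ?_⟩
      have h1 : oplus u x y ≤ (a + b + (a' + b')) ⊓ u := by
        refine inf_le_inf_right u (add_le_add (le_trans hxb inf_le_left)
          (le_trans hyb inf_le_left))
      have e1 : (a + b + (a' + b')) ⊓ u = (a + (b + a') + b') ⊓ u := by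
        simp only [add_assoc]
      have e2 : (a + (b + a') + b') ⊓ u = (a + ((b + a') ⊓ u) + b') ⊓ u :=
        (trunc_mid u a (b + a') b' (hAC ha).1 (hBC hb').1).symm
      unfold oplus at he
      have e3 : (a + ((a' + b₂) ⊓ u) + b') ⊓ u = (a + a' + (b₂ + b')) ⊓ u := by
        rw [trunc_mid u a (a' + b₂) b' (hAC ha).1 (hBC hb').1]
        simp only [add_assoc]
      have e4 : (a + a' + (b₂ + b')) ⊓ u = oplus u (oplus u a a') (oplus u b₂ b') := by
        unfold oplus
        rw [trunc_right u (b₂ + b') ((a + a') ⊓ u)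
            (le_inf (add_nonneg (hAC ha).1 (hAC ha').1) hu0),
          trunc_left u (a + a') (b₂ + b') (add_nonneg (hBC hb₂).1 (hBC hb').1)]
      rw [e1, e2, he, e3, e4] at h1
      exact h1
  have hInormal : IsNormalIdealIn u C I := by
    refine ⟨hIideal, ?_⟩
    intro x hx
    ext z
    constructor
    · rintro ⟨i, ⟨hiC, a, ha, b, hb, hib⟩, rfl⟩
      set j : G := (x + i) ⊓ u - x with hj
      have hjx : j + x = (x + i) ⊓ u := sub_add_cancel _ _
      have hxle : x ≤ (x + i) ⊓ u := le_inf (le_add_of_nonneg_right hiC.1) hx.2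
      have hj0 : 0 ≤ j := by rw [hj]; exact sub_nonneg.2 hxle
      have hju : j ≤ u := le_trans (sub_le_sub_right inf_le_right x)
        (sub_le_self u hx.1)
      obtain ⟨a₁, ha₁, b₁, hb₁, hkey⟩ := key1 x hx a ha b hb
      have hbound : (x + i) ⊓ u ≤ (a₁ + b₁ + x) ⊓ u := by
        rw [← hkey]
        calc (x + i) ⊓ u ≤ (x + ((a + b) ⊓ u)) ⊓ u :=
              inf_le_inf_right u (add_le_add_right hib x)
          _ = (x + (a + b)) ⊓ u := trunc_right u (a + b) x hx.1
          _ = (x + a + b) ⊓ u := by rw [add_assoc]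
      have hjb : j ≤ oplus u a₁ b₁ := by
        have h2 : j ≤ (a₁ + b₁ + x) ⊓ u - x := sub_le_sub_right hbound x
        have h3 : (a₁ + b₁ + x) ⊓ u - x = (a₁ + b₁) ⊓ (u - x) := by
          rw [sub_eq_add_neg, inf_add, add_assoc, add_neg_cancel, add_zero,
            sub_eq_add_neg]
        refine le_trans h2 (le_trans (le_of_eq h3) ?_)
        exact inf_le_inf_left _ (sub_le_self u hx.1)
      refine ⟨j, ⟨⟨hj0, hju⟩, a₁, ha₁, b₁, hb₁, hjb⟩, ?_⟩
      show (j + x) ⊓ u = (x + i) ⊓ u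
      rw [hjx, inf_assoc, inf_idem]
    · rintro ⟨i, ⟨hiC, a, ha, b, hb, hib⟩, rfl⟩
      set j : G := -x + ((i + x) ⊓ u) with hj
      have hjx : x + j = (i + x) ⊓ u := by rw [hj, ← add_assoc, add_neg_cancel, zero_add]
      have hxle : x ≤ (i + x) ⊓ u := le_inf (le_add_of_nonneg_left hiC.1) hx.2
      have hj0 : 0 ≤ j := by
        rw [hj]; rw [← neg_add_cancel x]; exact add_le_add_right hxle (-x)
      have hju : j ≤ u := by
        rw [hj]
        calc -x + ((i + x) ⊓ u) ≤ -x + u := add_le_add_right inf_le_right (-x)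
          _ ≤ 0 + u := add_le_add_left (neg_nonpos.2 hx.1) u
          _ = u := zero_add u
      obtain ⟨a₁, ha₁, b₁, hb₁, hkey⟩ := key2 x hx a ha b hb
      have hbound : (i + x) ⊓ u ≤ (x + (a₁ + b₁)) ⊓ u := by
        rw [← hkey]
        calc (i + x) ⊓ u ≤ ((a + b) ⊓ u + x) ⊓ u :=
              inf_le_inf_right u (add_le_add_left hib x)
          _ = (a + b + x) ⊓ u := trunc_left u (a + b) x hx.1
      have hjb : j ≤ oplus u a₁ b₁ := by
        have h2 : j ≤ -x + ((x + (a₁ + b₁)) ⊓ u) := add_le_add_right hbound (-x)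
        have h3 : -x + ((x + (a₁ + b₁)) ⊓ u) = (a₁ + b₁) ⊓ (-x + u) := by
          rw [add_inf, ← add_assoc, neg_add_cancel, zero_add]
        refine le_trans h2 (le_trans (le_of_eq h3) ?_)
        refine inf_le_inf_left _ ?_
        calc -x + u ≤ 0 + u := add_le_add_left (neg_nonpos.2 hx.1) u
          _ = u := zero_add u
      refine ⟨j, ⟨⟨hj0, hju⟩, a₁, ha₁, b₁, hb₁, hjb⟩, ?_⟩
      show (x + j) ⊓ u = (i + x) ⊓ u
      rw [hjx, inf_assoc, inf_idem]
  -- A ∪ B ⊆ I and hence u ∈ I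
  have hABI : A ∪ B ⊆ I := by
    rintro x (hx | hx)
    · refine ⟨hAC hx, x, hx, 0, h0B, ?_⟩
      show x ≤ (x + 0) ⊓ u
      rw [add_zero]; exact le_inf (le_refl x) (hAC hx).2
    · refine ⟨hBC hx, 0, h0A, x, hx, ?_⟩
      show x ≤ (0 + x) ⊓ u
      rw [zero_add]; exact le_inf (le_refl x) (hBC hx).2
  have huI : u ∈ I := by
    have huC : u ∈ C := ⟨hu0, le_refl u⟩
    rw [← hgen] at huC
    exact huC I ⟨hInormal, hABI⟩
  obtain ⟨-, a, ha, b, hb, hub⟩ := huI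
  have huab : u ≤ a + b := le_trans hub inf_le_left
  have ha0 : 0 ≤ a := (hAC ha).1
  have hau : a ≤ u := (hAC ha).2
  have hb0 : 0 ≤ b := (hBC hb).1
  have hbu : b ≤ u := (hBC hb).2
  -- x ⊓ b = 0 for every x ∈ A
  have hinf0 : ∀ x ∈ A, x ⊓ b = 0 := by
    intro x hx
    have h1 : x ⊓ b ∈ A := hAdc x hx (x ⊓ b)
      ⟨le_inf (hAC hx).1 hb0, le_trans inf_le_left (hAC hx).2⟩ inf_le_left
    have h2 : x ⊓ b ∈ B := hBdc b hb (x ⊓ b)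
      ⟨le_inf (hAC hx).1 hb0, le_trans inf_le_left (hAC hx).2⟩ inf_le_right
    have : x ⊓ b ∈ A ∩ B := ⟨h1, h2⟩
    rw [hAB] at this
    exact this
  -- every x ∈ A satisfies x ≤ a
  have hAle : ∀ x ∈ A, x ≤ a := by
    intro x hx
    have hx0 : 0 ≤ x := (hAC hx).1
    have hxab : x ≤ a + b := le_trans (hAC hx).2 huab
    have h1 : -a + x ≤ b := by
      rw [← neg_add_cancel_left a b]
      exact add_le_add_right hxab (-a)
    have h2 : -a + x ≤ x :=
      le_trans (add_le_add_left (neg_nonpos.2 ha0) x) (by rw [zero_add])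
    have h3 : (-a + x) ⊔ 0 ≤ x ⊓ b := sup_le (le_inf h2 h1) (le_inf hx0 hb0)
    rw [hinf0 x hx] at h3
    have h4 : -a + x ≤ 0 := le_trans le_sup_left h3
    calc x = a + (-a + x) := (add_neg_cancel_left a x).symm
      _ ≤ a + 0 := add_le_add_right h4 a
      _ = a := add_zero a
  -- a is Boolean
  have haBool : IsBooleanIn u C a := by
    refine ⟨hAC ha, ?_⟩
    have habinf : a ⊓ b = 0 := hinf0 a ha
    show (a + a) ⊓ u = a
    refine le_antisymm ?_ (le_inf (le_add_of_nonneg_left ha0) hau)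
    calc (a + a) ⊓ u ≤ (a + a) ⊓ (a + b) := inf_le_inf_left _ huab
      _ = a + (a ⊓ b) := by rw [add_inf]
      _ = a := by rw [habinf, add_zero]
  have hAeq : A = dsetIn C a := by
    ext x
    constructor
    · intro hx
      exact ⟨hAC hx, hAle x hx⟩
    · rintro ⟨hxC, hxa⟩
      exact hAdc a ha x hxC hxa
  refine ⟨a, ⟨ha, haBool, hAeq⟩, ?_⟩
  rintro a' ⟨ha', -, hAeq'⟩
  have h1 : a' ≤ a := by
    have : a' ∈ dsetIn C a := by rw [← hAeq]; exact ha'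
    exact this.2
  have h2 : a ≤ a' := by
    have : a ∈ dsetIn C a' := by rw [← hAeq']; exact ha
    exact this.2
  exact le_antisymm h1 h2
end
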